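/- Let A = [[cos θ, -sin θ],[sin θ, cos θ]] with sin θ ≠ 0, and let B : ℝ → SL(2,ℝ) be a one-parameter subgroup with B(1) elliptic (|trace B(1)| < 2) and B nonconstant. Then the function t ↦ trace(A · B(t)) has nonzero derivative at t = 0. -/

import Mathlib

open Real Matrix

noncomputable def Arot (θ : ℝ) : Matrix (Fin 2) (Fin 2) ℝ :=
  !![Real.cos θ, -Real.sin θ; Real.sin θ, Real.cos θ]

theorem deriv_trace_nonzero
    (θ : ℝ) (hθ : Real.sin θ ≠ 0)
    (B : ℝ → Matrix (Fin 2) (Fin 2) ℝ)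
    (hdet : ∀ t, (B t).det = 1)
    (hhom : ∀ s t, B (s + t) = B s * B t)
    (h0 : B 0 = 1)
    (D : Matrix (Fin 2) (Fin 2) ℝ)
    (hderiv : ∀ i j, HasDerivAt (fun t => B t i j) (D i j) 0)
    (hell : |Matrix.trace (B 1)| < 2)
    (hnc : ∃ t, B t ≠ 1) :
    ∀ L : ℝ, HasDerivAt (fun t => Matrix.trace (Arot θ * B t)) L 0 → L ≠ 0 := by
  classical
  intro L hL hL0
  subst hL0
  -- 1. compute the derivative of the trace
  have htr : HasDerivAt (fun t => Matrix.trace (Arot θ * B t))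
      (Real.cos θ * D 0 0 + (-Real.sin θ) * D 1 0 + (Real.sin θ * D 0 1 + Real.cos θ * D 1 1)) 0 := by
    have heq : (fun t => Matrix.trace (Arot θ * B t)) =
        fun t => Real.cos θ * B t 0 0 + (-Real.sin θ) * B t 1 0
          + (Real.sin θ * B t 0 1 + Real.cos θ * B t 1 1) := by
      funext t
      simp [Arot, Matrix.trace_fin_two, Matrix.mul_apply, Matrix.vecMul, dotProduct,
        Fin.sum_univ_two]
    rw [heq]
    exact (((hderiv 0 0).const_mul _).add ((hderiv 1 0).const_mul _)).add
      (((hderiv 0 1).const_mul _).add ((hderiv 1 1).const_mul _))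
  have hLval : Real.cos θ * D 0 0 + (-Real.sin θ) * D 1 0
      + (Real.sin θ * D 0 1 + Real.cos θ * D 1 1) = 0 := htr.unique hL
  -- 2. trace of D is zero
  have h00 : B 0 0 0 = 1 := by rw [h0]; rfl
  have h01 : B 0 0 1 = 0 := by rw [h0]; rfl
  have h10 : B 0 1 0 = 0 := by rw [h0]; rfl
  have h11 : B 0 1 1 = 1 := by rw [h0]; rfl
  have hdet0 : HasDerivAt (fun t => (B t).det)
      (D 0 0 * B 0 1 1 + B 0 0 0 * D 1 1 - (D 0 1 * B 0 1 0 + B 0 0 1 * D 1 0)) 0 := by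
    have heq : (fun t => (B t).det) =
        fun t => B t 0 0 * B t 1 1 - B t 0 1 * B t 1 0 := by
      funext t; exact Matrix.det_fin_two _
    rw [heq]
    exact ((hderiv 0 0).mul (hderiv 1 1)).sub ((hderiv 0 1).mul (hderiv 1 0))
  have hdetc : HasDerivAt (fun t => (B t).det) 0 0 := by
    have : (fun t => (B t).det) = fun _ : ℝ => (1 : ℝ) := funext hdet
    rw [this]; exact hasDerivAt_const _ _
  have htrD : D 0 0 + D 1 1 = 0 := by
    have := hdet0.unique hdetc
    rw [h00, h01, h10, h11] at this
    linarith [this]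
  -- 3. D is symmetric
  have hDsym : D 0 1 = D 1 0 := by
    have : Real.sin θ * (D 0 1 - D 1 0) = 0 := by linear_combination hLval - Real.cos θ * htrD
    have := mul_eq_zero.mp this
    rcases this with h | h
    · exact absurd h hθ
    · linarith
  have hDt : Dᵀ = D := by
    ext i j
    fin_cases i <;> fin_cases j <;>
      simp [Matrix.transpose_apply, hDsym]
  -- 4. B t = exp (t • D)
  letI : NormedRing (Matrix (Fin 2) (Fin 2) ℝ) := Matrix.linftyOpNormedRing
  letI : NormedAlgebra ℝ (Matrix (Fin 2) (Fin 2) ℝ) := Matrix.linftyOpNormedAlgebra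
  letI : CompleteSpace (Matrix (Fin 2) (Fin 2) ℝ) := FiniteDimensional.complete ℝ _
  have hB0 : HasDerivAt B D 0 := by
    have hsum : HasDerivAt (fun t => ∑ i : Fin 2, ∑ j : Fin 2,
        B t i j • Matrix.single i j (1 : ℝ))
        (∑ i : Fin 2, ∑ j : Fin 2, D i j • Matrix.single i j (1 : ℝ)) 0 :=
      HasDerivAt.fun_sum fun i _ => HasDerivAt.fun_sum fun j _ => (hderiv i j).smul_const _
    have hval : (∑ i : Fin 2, ∑ j : Fin 2, D i j • Matrix.single i j (1 : ℝ)) = D := by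
      simp_rw [Matrix.smul_single, smul_eq_mul, mul_one]
      exact (matrix_eq_sum_single D).symm
    rw [hval] at hsum
    exact hsum.congr_of_eventuallyEq (Filter.Eventually.of_forall fun t => by
      simp_rw [Matrix.smul_single, smul_eq_mul, mul_one]
      exact matrix_eq_sum_single (B t))
  have hBt : ∀ t, HasDerivAt B (D * B t) t := by
    intro t
    have hsh : HasDerivAt (fun u : ℝ => B (u - t)) D t := by
      have hB0' : HasDerivAt B D (t - t) := by simpa using hB0
      exact hB0'.comp_sub_const t t
    have hmul : HasDerivAt (fun u : ℝ => B (u - t) * B t) (D * B t) t := hsh.mul_const (B t)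
    exact hmul.congr_of_eventuallyEq (Filter.Eventually.of_forall fun u => by
      show B u = B (u - t) * B t
      rw [← hhom]; congr 1; ring)
  have hexpD : ∀ s : ℝ, HasDerivAt (fun u : ℝ => NormedSpace.exp (u • (-D)))
      (NormedSpace.exp (s • (-D)) * (-D)) s := fun s => hasDerivAt_exp_smul_const (-D) s
  set g : ℝ → Matrix (Fin 2) (Fin 2) ℝ := fun t => NormedSpace.exp (t • (-D)) * B t with hg_def
  have hg : ∀ t, HasDerivAt g 0 t := by
    intro t
    have := (hexpD t).mul (hBt t)
    refine this.congr_deriv ?_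
    rw [mul_assoc, neg_mul, mul_neg]
    abel
  have hgconst : ∀ t, g t = g 0 :=
    fun t => is_const_of_deriv_eq_zero
      (fun u => (hg u).differentiableAt) (fun u => (hg u).deriv) t 0
  have hg0 : g 0 = 1 := by
    simp [hg_def, h0, zero_smul, NormedSpace.exp_zero]
  have hBexp : ∀ t, B t = NormedSpace.exp (t • D) := by
    intro t
    have h1 : NormedSpace.exp (t • D) * (NormedSpace.exp (t • (-D)) * B t)
        = NormedSpace.exp (t • D) := by
      rw [show NormedSpace.exp (t • (-D)) * B t = g t from rfl, hgconst, hg0, mul_one]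
    have h2 : NormedSpace.exp (t • D) * NormedSpace.exp (t • (-D)) = 1 := by
      rw [← Matrix.exp_add_of_commute]
      · simp [NormedSpace.exp_zero]
      · rw [smul_neg]; exact (Commute.refl _).neg_right
    rw [← mul_assoc, h2, one_mul] at h1
    exact h1
  -- 5. B(1/2) is symmetric
  have hsymm : (B (1/2 : ℝ))ᵀ = B (1/2 : ℝ) := by
    rw [hBexp, ← Matrix.exp_transpose, Matrix.transpose_smul, hDt]
  -- 6. contradiction
  set N := B (1/2 : ℝ) with hN
  have hB1 : B 1 = N * N := by
    rw [show (1 : ℝ) = 1/2 + 1/2 by norm_num, hhom]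
  have hNsym : N 0 1 = N 1 0 := by
    have := congrFun (congrFun hsymm 1) 0
    simpa [Matrix.transpose_apply] using this
  have hNdet : N 0 0 * N 1 1 - N 0 1 * N 1 0 = 1 := by
    have := hdet (1/2 : ℝ)
    rwa [Matrix.det_fin_two] at this
  have htr1 : Matrix.trace (B 1) = N 0 0 * N 0 0 + N 0 1 * N 1 0 + (N 1 0 * N 0 1 + N 1 1 * N 1 1) := by
    rw [hB1]
    simp [Matrix.trace_fin_two, Matrix.mul_apply, Fin.sum_univ_two]
  have hlt : Matrix.trace (B 1) < 2 := (abs_lt.mp hell).2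
  rw [htr1] at hlt
  rw [← hNsym] at hlt hNdet
  nlinarith [sq_nonneg (N 0 0 - N 1 1), sq_nonneg (N 0 1)]
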